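/- Lipschitz-type difference bound for perturbed norm differences: let f(x) = ‖x‖_α on ℝ^m with α ∈ [2,∞), let β̃, β₀, δ/r ∈ ℝ^m with ‖β̃ − β₀‖₂ + ‖δ‖₂/r < ‖β₀‖_α. Then |(f(β̃ + δ/r) − f(β̃)) − (f(β₀ + δ/r) − f(β₀))| ≤ (α−1) · 1{m>1} · (‖β̃−β₀‖₂ + ‖δ‖₂/r) / (‖β₀‖_α − ‖β̃−β₀‖₂ − ‖δ‖₂/r) · ‖δ‖₂/r. -/

import Mathlib

open scoped BigOperators


/-- The Euclidean norm on `ℝ^m`. -/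
noncomputable def e2norm {m : ℕ} (x : Fin m → ℝ) : ℝ := Real.sqrt (∑ i, x i ^ 2)

/-- The ℓ_α norm on `ℝ^m`. -/
noncomputable def lpnorm (α : ℝ) {m : ℕ} (x : Fin m → ℝ) : ℝ :=
  (∑ i, |x i| ^ α) ^ (1 / α)



/-- |x|^α = (x^2)^(α/2) -/
private lemma abs_rpow_eq {α : ℝ} (hα : 2 ≤ α) (x : ℝ) :
    |x| ^ α = ((x ^ 2 : ℝ)) ^ (α / 2) := by
  rw [← sq_abs, ← Real.rpow_natCast |x| 2, ← Real.rpow_mul (abs_nonneg x)]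
  congr 1
  push_cast
  ring

private lemma hasDerivAt_P {α : ℝ} (hα : 2 ≤ α) (x : ℝ) :
    HasDerivAt (fun y : ℝ => ((y ^ 2 : ℝ)) ^ (α / 2)) (α * (x * (x ^ 2 : ℝ) ^ (α / 2 - 1))) x := by
  have h1 : HasDerivAt (fun y : ℝ => (y ^ 2 : ℝ)) (2 * x) x := by
    simpa using hasDerivAt_pow 2 x
  have h2 := h1.rpow_const (p := α / 2) (Or.inr (by linarith))
  convert h2 using 1
  ring

private lemma hasDerivAt_G {α : ℝ} (hα : 2 ≤ α) (x : ℝ) :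
    HasDerivAt (fun y : ℝ => y * ((y ^ 2 : ℝ)) ^ (α / 2 - 1))
      ((α - 1) * (x ^ 2 : ℝ) ^ (α / 2 - 1)) x := by
  rcases eq_or_ne x 0 with rfl | hx
  · rcases eq_or_lt_of_le hα with h2 | h2
    · -- α = 2
      have hfun : (fun y : ℝ => y * ((y ^ 2 : ℝ)) ^ (α / 2 - 1)) = fun y : ℝ => y := by
        funext y
        rw [← h2]
        norm_num
      rw [hfun, ← h2]
      norm_num
      exact hasDerivAt_id 0
    · -- α > 2 : derivative is 0 at 0
      have hexp : 0 < α / 2 - 1 := by linarith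
      have hval : (((0:ℝ) ^ 2 : ℝ)) ^ (α / 2 - 1) = 0 := by
        rw [zero_pow (by norm_num), Real.zero_rpow (ne_of_gt hexp)]
      rw [hasDerivAt_iff_tendsto_slope]
      have hcont : ContinuousAt (fun y : ℝ => ((y ^ 2 : ℝ)) ^ (α / 2 - 1)) 0 := by
        have hc1 : ContinuousAt (fun y : ℝ => y ^ (α / 2 - 1)) (((0:ℝ) ^ 2 : ℝ)) :=
          Real.continuousAt_rpow_const _ _ (Or.inr (le_of_lt hexp))
        have hc2 : ContinuousAt (fun y : ℝ => (y ^ 2 : ℝ)) (0:ℝ) := by fun_prop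
        exact ContinuousAt.comp (x := (0:ℝ)) (g := fun y : ℝ => y ^ (α / 2 - 1))
          (f := fun y : ℝ => (y ^ 2 : ℝ)) hc1 hc2
      have hlim : Filter.Tendsto (fun y : ℝ => ((y ^ 2 : ℝ)) ^ (α / 2 - 1))
          (nhdsWithin 0 {(0:ℝ)}ᶜ) (nhds ((α - 1) * ((0:ℝ) ^ 2 : ℝ) ^ (α / 2 - 1))) := by
        rw [hval, mul_zero]
        have h := hcont.tendsto
        rw [hval] at h
        exact h.mono_left nhdsWithin_le_nhds
      refine hlim.congr' ?_
      filter_upwards [self_mem_nhdsWithin] with y hy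
      have hy0 : y ≠ 0 := hy
      simp only [slope_def_field]
      field_simp [hy0]
      ring
  · have hx2 : (x ^ 2 : ℝ) ≠ 0 := pow_ne_zero 2 hx
    have hpos : (0:ℝ) < x ^ 2 := lt_of_le_of_ne (sq_nonneg x) (Ne.symm hx2)
    have h1 : HasDerivAt (fun y : ℝ => (y ^ 2 : ℝ)) (2 * x) x := by
      simpa using hasDerivAt_pow 2 x
    have h2 := h1.rpow_const (p := α / 2 - 1) (Or.inl hx2)
    have h3 := (hasDerivAt_id x).mul h2
    refine h3.congr_deriv ?_
    have key : (x ^ 2 : ℝ) * (x ^ 2 : ℝ) ^ (α / 2 - 1 - 1) = (x ^ 2 : ℝ) ^ (α / 2 - 1) := by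
      nth_rewrite 1 [← Real.rpow_one (x ^ 2 : ℝ)]
      rw [← Real.rpow_add hpos]
      norm_num
    rw [id_eq]
    nlinarith [key]

private lemma e2norm_nonneg {m : ℕ} (x : Fin m → ℝ) : 0 ≤ e2norm x := Real.sqrt_nonneg _

private lemma e2norm_sq {m : ℕ} (x : Fin m → ℝ) : (e2norm x) ^ 2 = ∑ i, x i ^ 2 :=
  Real.sq_sqrt (Finset.sum_nonneg fun i _ => sq_nonneg _)

private lemma e2norm_eq_norm {m : ℕ} (x : Fin m → ℝ) :
    e2norm x = ‖(WithLp.equiv 2 (Fin m → ℝ)).symm x‖ := by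
  rw [EuclideanSpace.norm_eq]
  unfold e2norm
  congr 1
  refine Finset.sum_congr rfl fun i _ => ?_
  simp [sq_abs]

private lemma e2norm_add_le {m : ℕ} (x y : Fin m → ℝ) :
    e2norm (x + y) ≤ e2norm x + e2norm y := by
  simp only [e2norm_eq_norm]
  rw [show (WithLp.equiv 2 (Fin m → ℝ)).symm (x + y)
      = (WithLp.equiv 2 (Fin m → ℝ)).symm x + (WithLp.equiv 2 (Fin m → ℝ)).symm y by rfl]
  exact norm_add_le _ _

private lemma e2norm_smul {m : ℕ} (t : ℝ) (x : Fin m → ℝ) :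
    e2norm (t • x) = |t| * e2norm x := by
  simp only [e2norm_eq_norm]
  rw [show (WithLp.equiv 2 (Fin m → ℝ)).symm (t • x)
      = t • (WithLp.equiv 2 (Fin m → ℝ)).symm x by rfl]
  rw [norm_smul]
  simp [Real.norm_eq_abs]

private lemma e2norm_sub_comm {m : ℕ} (x y : Fin m → ℝ) :
    e2norm (x - y) = e2norm (y - x) := by
  unfold e2norm
  congr 1
  refine Finset.sum_congr rfl fun i _ => ?_
  simp only [Pi.sub_apply]
  ring

/-- Sum of β-powers is at most the β-power of the sum, for β ≥ 1. -/
private lemma sum_rpow_le_rpow_sum {m : ℕ} {g : Fin m → ℝ} (hg : ∀ i, 0 ≤ g i) {β : ℝ}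
    (hβ : 1 ≤ β) : ∑ i, g i ^ β ≤ (∑ i, g i) ^ β := by
  set T := ∑ i, g i with hT
  have hT0 : 0 ≤ T := Finset.sum_nonneg fun i _ => hg i
  rcases eq_or_lt_of_le hT0 with h0 | h0
  · have hall : ∀ i ∈ Finset.univ, g i = 0 := by
      intro i _
      have := Finset.sum_eq_zero_iff_of_nonneg (fun i _ => hg i) |>.mp h0.symm
      exact this i (Finset.mem_univ i)
    rw [← h0]
    rw [Finset.sum_congr rfl fun i hi => by rw [hall i hi]]
    simp [Real.zero_rpow (by linarith : β ≠ 0)]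
  · have key : ∀ i, g i ^ β ≤ g i * T ^ (β - 1) := by
      intro i
      rcases eq_or_lt_of_le (hg i) with hgi | hgi
      · rw [← hgi, Real.zero_rpow (by linarith : β ≠ 0), zero_mul]
      · have hle : g i ≤ T := Finset.single_le_sum (fun i _ => hg i) (Finset.mem_univ i)
        calc g i ^ β = g i * g i ^ (β - 1) := by
              nth_rewrite 2 [← Real.rpow_one (g i)]
              rw [← Real.rpow_add hgi]
              norm_num
          _ ≤ g i * T ^ (β - 1) :=
              mul_le_mul_of_nonneg_left
                (Real.rpow_le_rpow (le_of_lt hgi) hle (by linarith)) (hg i)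
    calc ∑ i, g i ^ β ≤ ∑ i, g i * T ^ (β - 1) := Finset.sum_le_sum fun i _ => key i
      _ = T * T ^ (β - 1) := by rw [← Finset.sum_mul]
      _ = T ^ β := by
          nth_rewrite 1 [← Real.rpow_one T]
          rw [← Real.rpow_add h0]
          norm_num

private lemma lpnorm_le_e2norm {m : ℕ} {α : ℝ} (hα : 2 ≤ α) (z : Fin m → ℝ) :
    lpnorm α z ≤ e2norm z := by
  have hα0 : (0:ℝ) < α := by linarith
  unfold lpnorm
  have h1 : ∑ i, |z i| ^ α ≤ (∑ i, z i ^ 2) ^ (α / 2) := by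
    calc ∑ i, |z i| ^ α = ∑ i, ((z i ^ 2 : ℝ)) ^ (α / 2) :=
          Finset.sum_congr rfl fun i _ => abs_rpow_eq hα (z i)
      _ ≤ (∑ i, z i ^ 2) ^ (α / 2) :=
          sum_rpow_le_rpow_sum (fun i => sq_nonneg _) (by linarith)
  have hsum : (0:ℝ) ≤ ∑ i, z i ^ 2 := Finset.sum_nonneg fun i _ => sq_nonneg _
  calc (∑ i, |z i| ^ α) ^ (1 / α) ≤ ((∑ i, z i ^ 2) ^ (α / 2)) ^ (1 / α) := by
        apply Real.rpow_le_rpow _ h1 (by positivity)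
        exact Finset.sum_nonneg fun i _ => Real.rpow_nonneg (abs_nonneg _) α
    _ = (∑ i, z i ^ 2) ^ ((α / 2) * (1 / α)) := by rw [← Real.rpow_mul hsum]
    _ = (∑ i, z i ^ 2) ^ ((1:ℝ) / 2) := by
        congr 1
        field_simp
    _ = e2norm z := by rw [e2norm, Real.sqrt_eq_rpow]

private lemma lpnorm_lower {m : ℕ} {α : ℝ} (hα : 2 ≤ α) (b0 w : Fin m → ℝ) :
    lpnorm α b0 - e2norm (w - b0) ≤ lpnorm α w := by
  have htri : lpnorm α b0 ≤ lpnorm α w + lpnorm α (b0 - w) := by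
    have := Real.Lp_add_le Finset.univ w (b0 - w) (by linarith : (1:ℝ) ≤ α)
    unfold lpnorm
    simpa using this
  have h2 : lpnorm α (b0 - w) ≤ e2norm (b0 - w) := lpnorm_le_e2norm hα _
  rw [e2norm_sub_comm w b0]
  linarith

section Bilinear

variable {m : ℕ} {α : ℝ}

/-- Cauchy–Schwarz for the PSD form: `(∑ G v)² ≤ S * ∑ P2 v²`. -/
private lemma CS_quad (hα : 2 ≤ α) (c v : Fin m → ℝ) :
    (∑ i, c i * ((c i ^ 2 : ℝ)) ^ (α / 2 - 1) * v i) ^ 2 ≤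
      (∑ i, ((c i ^ 2 : ℝ)) ^ (α / 2)) *
        ∑ i, ((c i ^ 2 : ℝ)) ^ (α / 2 - 1) * v i ^ 2 := by
  set P : Fin m → ℝ := fun i => ((c i ^ 2 : ℝ)) ^ (α / 2) with hP
  set P2 : Fin m → ℝ := fun i => ((c i ^ 2 : ℝ)) ^ (α / 2 - 1) with hP2
  have hPnn : ∀ i, 0 ≤ P i := fun i => Real.rpow_nonneg (sq_nonneg _) _
  have hP2nn : ∀ i, 0 ≤ P2 i := fun i => Real.rpow_nonneg (sq_nonneg _) _
  set f : Fin m → ℝ := fun i => Real.sqrt (P i) with hf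
  set g : Fin m → ℝ := fun i => if c i = 0 then 0 else c i * P2 i * v i / Real.sqrt (P i)
    with hg
  have hPpos : ∀ i, c i ≠ 0 → 0 < P i := fun i hi => Real.rpow_pos_of_pos (by positivity) _
  have hPP2 : ∀ i, c i ≠ 0 → c i ^ 2 * P2 i = P i := by
    intro i hi
    rw [hP2, hP]
    simp only
    nth_rewrite 1 [← Real.rpow_one ((c i ^ 2 : ℝ))]
    rw [← Real.rpow_add (by positivity)]
    norm_num
  have hfg : ∀ i, f i * g i = c i * P2 i * v i := by
    intro i
    by_cases hi : c i = 0
    · simp [hg, hf, hi]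
    · have hs : Real.sqrt (P i) ≠ 0 := ne_of_gt (Real.sqrt_pos.mpr (hPpos i hi))
      rw [hg, hf]
      simp only [if_neg hi]
      field_simp
  have hg2 : ∀ i, g i ^ 2 ≤ P2 i * v i ^ 2 := by
    intro i
    by_cases hi : c i = 0
    · rw [hg]
      simp only [if_pos hi]
      have : (0:ℝ) ^ 2 = 0 := by norm_num
      rw [this]
      positivity
    · have heq : g i ^ 2 = P2 i * v i ^ 2 := by
        rw [hg]
        simp only [if_neg hi]
        rw [div_pow, Real.sq_sqrt (hPnn i)]
        rw [show (c i * P2 i * v i) ^ 2 = (c i ^ 2 * P2 i) * (P2 i * v i ^ 2) by ring,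
          hPP2 i hi]
        rw [mul_comm (P i), mul_div_assoc, div_self (ne_of_gt (hPpos i hi)), mul_one]
      exact heq.le
  calc (∑ i, c i * P2 i * v i) ^ 2 = (∑ i, f i * g i) ^ 2 := by
        rw [Finset.sum_congr rfl fun i _ => (hfg i)]
    _ ≤ (∑ i, f i ^ 2) * ∑ i, g i ^ 2 := Finset.sum_mul_sq_le_sq_mul_sq _ _ _
    _ = (∑ i, P i) * ∑ i, g i ^ 2 := by
        rw [Finset.sum_congr rfl fun i _ => Real.sq_sqrt (hPnn i)]
    _ ≤ (∑ i, P i) * ∑ i, P2 i * v i ^ 2 := by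
        apply mul_le_mul_of_nonneg_left (Finset.sum_le_sum fun i _ => hg2 i)
        exact Finset.sum_nonneg fun i _ => hPnn i

/-- Bound on the quadratic form: `0 ≤ Bq v ≤ S^(2-2/α) ‖v‖²`. -/
private lemma Bq_le (hα : 2 ≤ α) (c v : Fin m → ℝ)
    (hS : 0 < ∑ i, ((c i ^ 2 : ℝ)) ^ (α / 2)) :
    (∑ i, ((c i ^ 2 : ℝ)) ^ (α / 2)) * (∑ i, ((c i ^ 2 : ℝ)) ^ (α / 2 - 1) * v i ^ 2) -
        (∑ i, c i * ((c i ^ 2 : ℝ)) ^ (α / 2 - 1) * v i) ^ 2 ≤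
      (∑ i, ((c i ^ 2 : ℝ)) ^ (α / 2)) ^ (2 - 2 / α) * (e2norm v) ^ 2 := by
  have hα0 : (0:ℝ) < α := by linarith
  set S : ℝ := ∑ i, ((c i ^ 2 : ℝ)) ^ (α / 2) with hSdef
  have hM : ∀ i, ((c i ^ 2 : ℝ)) ^ (α / 2 - 1) ≤ S ^ ((α - 2) / α) := by
    intro i
    by_cases hi : c i = 0
    · rcases eq_or_lt_of_le hα with h2 | h2
      · rw [hi, ← h2]
        norm_num
      · rw [hi]
        have h1 : ((0:ℝ) ^ 2 : ℝ) ^ (α / 2 - 1) = 0 := by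
          rw [zero_pow (by norm_num), Real.zero_rpow (by intro h; linarith)]
        rw [h1]
        positivity
    · have hple : ((c i ^ 2 : ℝ)) ^ (α / 2) ≤ S :=
        Finset.single_le_sum (fun j _ => Real.rpow_nonneg (sq_nonneg _) _) (Finset.mem_univ i)
      have heq : ((c i ^ 2 : ℝ)) ^ (α / 2 - 1) = (((c i ^ 2 : ℝ)) ^ (α / 2)) ^ ((α - 2) / α) := by
        rw [← Real.rpow_mul (sq_nonneg _)]
        congr 1
        field_simp
      rw [heq]
      exact Real.rpow_le_rpow (Real.rpow_nonneg (sq_nonneg _) _) hple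
        (div_nonneg (by linarith) (by linarith))
  have h1 : ∑ i, ((c i ^ 2 : ℝ)) ^ (α / 2 - 1) * v i ^ 2 ≤ S ^ ((α - 2) / α) * ∑ i, v i ^ 2 := by
    rw [Finset.mul_sum]
    refine Finset.sum_le_sum fun i _ => ?_
    exact mul_le_mul_of_nonneg_right (hM i) (sq_nonneg _)
  have hcs := CS_quad hα c v
  have h2 : S * (S ^ ((α - 2) / α) * ∑ i, v i ^ 2) = S ^ (2 - 2/α) * (e2norm v) ^ 2 := by
    rw [e2norm_sq]
    nth_rewrite 1 [← Real.rpow_one S]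
    rw [← mul_assoc, ← Real.rpow_add hS]
    congr 2
    field_simp
    ring
  have h3 : S * (∑ i, ((c i ^ 2 : ℝ)) ^ (α / 2 - 1) * v i ^ 2) ≤ S ^ (2 - 2/α) * (e2norm v) ^ 2 := by
    rw [← h2]
    exact mul_le_mul_of_nonneg_left h1 hS.le
  nlinarith [sq_nonneg (∑ i, c i * ((c i ^ 2 : ℝ)) ^ (α / 2 - 1) * v i)]

/-- The key bilinear bound `|B(d,u)| ≤ S^(2-2/α) ‖d‖ ‖u‖`. -/
private lemma Bb_bound (hα : 2 ≤ α) (c d u : Fin m → ℝ)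
    (hS : 0 < ∑ i, ((c i ^ 2 : ℝ)) ^ (α / 2)) :
    |(∑ i, ((c i ^ 2 : ℝ)) ^ (α / 2)) * (∑ i, ((c i ^ 2 : ℝ)) ^ (α / 2 - 1) * (d i * u i)) -
        (∑ i, c i * ((c i ^ 2 : ℝ)) ^ (α / 2 - 1) * d i) *
          (∑ i, c i * ((c i ^ 2 : ℝ)) ^ (α / 2 - 1) * u i)| ≤
      (∑ i, ((c i ^ 2 : ℝ)) ^ (α / 2)) ^ (2 - 2 / α) * e2norm d * e2norm u := by
  set S : ℝ := ∑ i, ((c i ^ 2 : ℝ)) ^ (α / 2) with hSdef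
  set P2 : Fin m → ℝ := fun i => ((c i ^ 2 : ℝ)) ^ (α / 2 - 1) with hP2
  set G : Fin m → ℝ := fun i => c i * P2 i with hG
  set Bb : ℝ := S * (∑ i, P2 i * (d i * u i)) - (∑ i, G i * d i) * (∑ i, G i * u i) with hBb
  set Bqd : ℝ := S * (∑ i, P2 i * d i ^ 2) - (∑ i, G i * d i) ^ 2 with hBqd
  set Bqu : ℝ := S * (∑ i, P2 i * u i ^ 2) - (∑ i, G i * u i) ^ 2 with hBqu
  have hBqd0 : 0 ≤ Bqd := by
    have := CS_quad hα c d
    rw [hBqd]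
    simp only [hG, hP2] at *
    linarith
  have hBqu0 : 0 ≤ Bqu := by
    have := CS_quad hα c u
    rw [hBqu]
    simp only [hG, hP2] at *
    linarith
  -- discriminant argument
  have hquad : ∀ t : ℝ, 0 ≤ Bqu * (t * t) + (2 * Bb) * t + Bqd := by
    intro t
    have hcs := CS_quad hα c (fun i => d i + t * u i)
    have e1 : ∑ i, P2 i * (d i + t * u i) ^ 2 =
        (∑ i, P2 i * d i ^ 2) + 2 * t * (∑ i, P2 i * (d i * u i)) +
          t * t * (∑ i, P2 i * u i ^ 2) := by
      rw [Finset.mul_sum, Finset.mul_sum, ← Finset.sum_add_distrib, ← Finset.sum_add_distrib]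
      exact Finset.sum_congr rfl fun i _ => by ring
    have e2 : ∑ i, G i * (d i + t * u i) = (∑ i, G i * d i) + t * (∑ i, G i * u i) := by
      rw [Finset.mul_sum, ← Finset.sum_add_distrib]
      exact Finset.sum_congr rfl fun i _ => by ring
    have hcs' : (∑ i, G i * (d i + t * u i)) ^ 2 ≤ S * ∑ i, P2 i * (d i + t * u i) ^ 2 := by
      simpa only [hG, hP2, hSdef] using hcs
    rw [e1, e2] at hcs'
    have hid : Bqu * (t * t) + (2 * Bb) * t + Bqd =
        S * ((∑ i, P2 i * d i ^ 2) + 2 * t * (∑ i, P2 i * (d i * u i)) +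
          t * t * (∑ i, P2 i * u i ^ 2)) -
        ((∑ i, G i * d i) + t * (∑ i, G i * u i)) ^ 2 := by
      rw [hBqu, hBb, hBqd]
      ring
    linarith [hcs', hid]
  have hdisc := discrim_le_zero hquad
  rw [discrim] at hdisc
  have hBb2 : Bb ^ 2 ≤ Bqd * Bqu := by nlinarith [hdisc]
  have hbd : Bqd ≤ S ^ (2 - 2/α) * (e2norm d) ^ 2 := by
    have := Bq_le hα c d hS
    rw [hBqd]; simp only [hG, hP2, hSdef] at *
    linarith
  have hbu : Bqu ≤ S ^ (2 - 2/α) * (e2norm u) ^ 2 := by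
    have := Bq_le hα c u hS
    rw [hBqu]; simp only [hG, hP2, hSdef] at *
    linarith
  have hfin : Bb ^ 2 ≤ (S ^ (2 - 2/α) * e2norm d * e2norm u) ^ 2 := by
    calc Bb ^ 2 ≤ Bqd * Bqu := hBb2
      _ ≤ (S ^ (2 - 2/α) * (e2norm d) ^ 2) * (S ^ (2 - 2/α) * (e2norm u) ^ 2) := by
          apply mul_le_mul hbd hbu hBqu0
          positivity
      _ = (S ^ (2 - 2/α) * e2norm d * e2norm u) ^ 2 := by ring
  have habs : |Bb| ≤ S ^ (2 - 2/α) * e2norm d * e2norm u := by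
    have hrhs : 0 ≤ S ^ (2 - 2/α) * e2norm d * e2norm u := by
      have := e2norm_nonneg d
      have := e2norm_nonneg u
      positivity
    rw [← Real.sqrt_sq_eq_abs]
    calc Real.sqrt (Bb ^ 2) ≤ Real.sqrt ((S ^ (2 - 2/α) * e2norm d * e2norm u) ^ 2) :=
          Real.sqrt_le_sqrt hfin
      _ = S ^ (2 - 2/α) * e2norm d * e2norm u := Real.sqrt_sq hrhs
  exact habs

end Bilinear

section LineDeriv

variable {m : ℕ} {α : ℝ}

private lemma hasDerivAt_lineS (hα : 2 ≤ α) (c v : Fin m → ℝ) (t : ℝ) :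
    HasDerivAt (fun s : ℝ => ∑ i, (((c i + s * v i) ^ 2 : ℝ)) ^ (α / 2))
      (∑ i, α * ((c i + t * v i) * (((c i + t * v i) ^ 2 : ℝ)) ^ (α / 2 - 1)) * v i) t := by
  apply HasDerivAt.fun_sum
  intro i _
  have haff : HasDerivAt (fun s : ℝ => c i + s * v i) (v i) t := by
    simpa using ((hasDerivAt_id t).mul_const (v i)).const_add (c i)
  have h := (hasDerivAt_P hα (c i + t * v i)).comp t haff
  refine h.congr_deriv ?_
  ring

private lemma hasDerivAt_lineT (hα : 2 ≤ α) (c v u : Fin m → ℝ) (t : ℝ) :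
    HasDerivAt (fun s : ℝ => ∑ i,
        (c i + s * v i) * (((c i + s * v i) ^ 2 : ℝ)) ^ (α / 2 - 1) * u i)
      (∑ i, (α - 1) * (((c i + t * v i) ^ 2 : ℝ)) ^ (α / 2 - 1) * (v i * u i)) t := by
  apply HasDerivAt.fun_sum
  intro i _
  have haff : HasDerivAt (fun s : ℝ => c i + s * v i) (v i) t := by
    simpa using ((hasDerivAt_id t).mul_const (v i)).const_add (c i)
  have h := ((hasDerivAt_G hα (c i + t * v i)).comp t haff).mul_const (u i)
  simp only [Function.comp] at h
  refine h.congr_deriv ?_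
  ring

private lemma hasDerivAt_lineF (hα : 2 ≤ α) (c v : Fin m → ℝ) (t : ℝ)
    (hS : (∑ i, (((c i + t * v i) ^ 2 : ℝ)) ^ (α / 2)) ≠ 0) :
    HasDerivAt (fun s : ℝ => (∑ i, (((c i + s * v i) ^ 2 : ℝ)) ^ (α / 2)) ^ (1 / α))
      ((∑ i, (((c i + t * v i) ^ 2 : ℝ)) ^ (α / 2)) ^ (1 / α - 1) *
        ∑ i, (c i + t * v i) * (((c i + t * v i) ^ 2 : ℝ)) ^ (α / 2 - 1) * v i) t := by
  have hα0 : (0:ℝ) < α := by linarith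
  have h := (hasDerivAt_lineS hα c v t).rpow_const (p := 1 / α) (Or.inl hS)
  convert h using 1
  rw [show ∑ i, α * ((c i + t * v i) * (((c i + t * v i) ^ 2 : ℝ)) ^ (α / 2 - 1)) * v i
      = α * ∑ i, (c i + t * v i) * (((c i + t * v i) ^ 2 : ℝ)) ^ (α / 2 - 1) * v i by
    rw [Finset.mul_sum]; exact Finset.sum_congr rfl fun i _ => by ring]
  field_simp

private lemma hasDerivAt_lineGamma (hα : 2 ≤ α) (c d u : Fin m → ℝ) (s : ℝ)
    (hSpos : 0 < ∑ i, (((c i + s * d i) ^ 2 : ℝ)) ^ (α / 2)) :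
    HasDerivAt (fun s' : ℝ => (∑ i, (((c i + s' * d i) ^ 2 : ℝ)) ^ (α / 2)) ^ (1 / α - 1) *
        ∑ i, (c i + s' * d i) * (((c i + s' * d i) ^ 2 : ℝ)) ^ (α / 2 - 1) * u i)
      ((α - 1) * (∑ i, (((c i + s * d i) ^ 2 : ℝ)) ^ (α / 2)) ^ (1 / α - 2) *
        ((∑ i, (((c i + s * d i) ^ 2 : ℝ)) ^ (α / 2)) *
            (∑ i, (((c i + s * d i) ^ 2 : ℝ)) ^ (α / 2 - 1) * (d i * u i)) -
          (∑ i, (c i + s * d i) * (((c i + s * d i) ^ 2 : ℝ)) ^ (α / 2 - 1) * d i) *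
            (∑ i, (c i + s * d i) * (((c i + s * d i) ^ 2 : ℝ)) ^ (α / 2 - 1) * u i))) s := by
  have hα0 : (0:ℝ) < α := by linarith
  have hS : (∑ i, (((c i + s * d i) ^ 2 : ℝ)) ^ (α / 2)) ≠ 0 := ne_of_gt hSpos
  have hA := (hasDerivAt_lineS hα c d s).rpow_const (p := 1 / α - 1) (Or.inl hS)
  have hT := hasDerivAt_lineT hα c d u s
  have h := hA.mul hT
  refine h.congr_deriv ?_
  set S : ℝ := ∑ i, (((c i + s * d i) ^ 2 : ℝ)) ^ (α / 2) with hSd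
  set Gd : ℝ := ∑ i, (c i + s * d i) * (((c i + s * d i) ^ 2 : ℝ)) ^ (α / 2 - 1) * d i with hGd
  set Gu : ℝ := ∑ i, (c i + s * d i) * (((c i + s * d i) ^ 2 : ℝ)) ^ (α / 2 - 1) * u i with hGu
  set Pdu : ℝ := ∑ i, (((c i + s * d i) ^ 2 : ℝ)) ^ (α / 2 - 1) * (d i * u i) with hPdu
  have e1 : ∑ i, α * ((c i + s * d i) * (((c i + s * d i) ^ 2 : ℝ)) ^ (α / 2 - 1)) * d i
      = α * Gd := by
    rw [hGd, Finset.mul_sum]; exact Finset.sum_congr rfl fun i _ => by ring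
  have e2 : ∑ i, (α - 1) * (((c i + s * d i) ^ 2 : ℝ)) ^ (α / 2 - 1) * (d i * u i)
      = (α - 1) * Pdu := by
    rw [hPdu, Finset.mul_sum]; exact Finset.sum_congr rfl fun i _ => by ring
  rw [e1, e2]
  have key : S ^ (1 / α - 1) = S * S ^ (1 / α - 2) := by
    rw [show S * S ^ (1 / α - 2) = S ^ ((1:ℝ) + (1 / α - 2)) by
      rw [Real.rpow_add hSpos, Real.rpow_one]]
    congr 1
    ring
  rw [key]
  have key2 : S ^ (1 / α - 1 - 1) = S ^ (1 / α - 2) := by congr 1; ring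
  rw [key2]
  field_simp
  ring

end LineDeriv

private lemma gam_congr {m : ℕ} (α : ℝ) (u : Fin m → ℝ) (c c' : Fin m → ℝ)
    (h : ∀ i, c i = c' i) :
    (∑ i, ((c i ^ 2 : ℝ)) ^ (α / 2)) ^ (1 / α - 1) *
        ∑ i, c i * ((c i ^ 2 : ℝ)) ^ (α / 2 - 1) * u i =
      (∑ i, ((c' i ^ 2 : ℝ)) ^ (α / 2)) ^ (1 / α - 1) *
        ∑ i, c' i * ((c' i ^ 2 : ℝ)) ^ (α / 2 - 1) * u i := by
  rw [funext h]

private lemma sum_congr_base {m : ℕ} (α : ℝ) (c c' : Fin m → ℝ) (h : ∀ i, c i = c' i) :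
    ∑ i, ((c i ^ 2 : ℝ)) ^ (α / 2) = ∑ i, ((c' i ^ 2 : ℝ)) ^ (α / 2) := by
  rw [funext h]

/-- Lipschitz-type difference bound for perturbed norm differences: for the ℓ_α norm
with α ∈ [2,∞) and ‖β̃−β₀‖₂ + ‖δ‖₂/r < ‖β₀‖_α,
|(f(β̃+δ/r) − f(β̃)) − (f(β₀+δ/r) − f(β₀))| ≤
(α−1)·1{m>1}·(‖β̃−β₀‖₂+‖δ‖₂/r)/(‖β₀‖_α−‖β̃−β₀‖₂−‖δ‖₂/r)·‖δ‖₂/r. -/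
theorem lp_perturbed_difference_bound {m : ℕ} (hm : 1 ≤ m) (α : ℝ) (hα : 2 ≤ α)
    (tb b0 δ : Fin m → ℝ) (r : ℝ) (hr : 0 < r)
    (hcond : e2norm (tb - b0) + e2norm δ / r < lpnorm α b0) :
    |(lpnorm α (tb + r⁻¹ • δ) - lpnorm α tb) -
      (lpnorm α (b0 + r⁻¹ • δ) - lpnorm α b0)| ≤
      (α - 1) * (if 1 < m then 1 else 0) *
        (e2norm (tb - b0) + e2norm δ / r) /
        (lpnorm α b0 - e2norm (tb - b0) - e2norm δ / r) * (e2norm δ / r) := by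
  have hα0 : (0:ℝ) < α := by linarith
  have hα1 : (1:ℝ) < α := by linarith
  have hlpF : ∀ {k : ℕ} (w : Fin k → ℝ),
      lpnorm α w = (∑ i, ((w i ^ 2 : ℝ)) ^ (α / 2)) ^ (1 / α) := by
    intro k w
    unfold lpnorm
    congr 1
    exact Finset.sum_congr rfl fun i _ => abs_rpow_eq hα (w i)
  by_cases hm2 : 1 < m
  · -- main case
    rw [if_pos hm2]
    set u : Fin m → ℝ := tb - b0 with hu
    set d : Fin m → ℝ := r⁻¹ • δ with hd
    have hd_eq : e2norm d = e2norm δ / r := by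
      rw [hd, e2norm_smul, abs_inv, abs_of_pos hr, inv_mul_eq_div]
    set D : ℝ := e2norm δ / r with hD
    set L : ℝ := lpnorm α b0 with hL
    set A : ℝ := e2norm u + D with hA
    have hD0 : 0 ≤ D := by rw [hD]; exact div_nonneg (e2norm_nonneg _) hr.le
    have hu0 : 0 ≤ e2norm u := e2norm_nonneg _
    have hLA : 0 < L - A := by linarith [hcond]
    -- lower bound on S at points near b0
    have hlow : ∀ w : Fin m → ℝ, e2norm (w - b0) ≤ A →
        0 < ∑ i, ((w i ^ 2 : ℝ)) ^ (α / 2) ∧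
          L - A ≤ (∑ i, ((w i ^ 2 : ℝ)) ^ (α / 2)) ^ (1 / α) := by
      intro w hw
      have h1 : L - A ≤ lpnorm α w := by
        have := lpnorm_lower hα b0 w
        rw [← hL] at this
        linarith
      have hFv : lpnorm α w = (∑ i, ((w i ^ 2 : ℝ)) ^ (α / 2)) ^ (1 / α) := hlpF w
      constructor
      · by_contra hc
        push_neg at hc
        have hge : 0 ≤ ∑ i, ((w i ^ 2 : ℝ)) ^ (α / 2) :=
          Finset.sum_nonneg fun i _ => Real.rpow_nonneg (sq_nonneg _) _
        have hz : ∑ i, ((w i ^ 2 : ℝ)) ^ (α / 2) = 0 := le_antisymm hc hge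
        rw [hFv, hz, Real.zero_rpow (by positivity : (1:ℝ)/α ≠ 0)] at h1
        linarith
      · rw [← hFv]
        exact h1
    have hball : ∀ t s : ℝ, 0 ≤ t → t ≤ 1 → 0 ≤ s → s ≤ 1 →
        0 < (∑ i, (((b0 i + t * u i + s * d i) ^ 2 : ℝ)) ^ (α / 2)) ∧
          L - A ≤ (∑ i, (((b0 i + t * u i + s * d i) ^ 2 : ℝ)) ^ (α / 2)) ^ (1 / α) := by
      intro t s ht0 ht1 hs0 hs1
      have hveq : (fun i => b0 i + t * u i + s * d i) - b0 = t • u + s • d := by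
        funext i
        simp only [Pi.sub_apply, Pi.add_apply, Pi.smul_apply, smul_eq_mul]
        ring
      have hdist : e2norm ((fun i => b0 i + t * u i + s * d i) - b0) ≤ A := by
        rw [hveq]
        calc e2norm (t • u + s • d) ≤ e2norm (t • u) + e2norm (s • d) := e2norm_add_le _ _
          _ = |t| * e2norm u + |s| * e2norm d := by rw [e2norm_smul, e2norm_smul]
          _ ≤ 1 * e2norm u + 1 * e2norm d := by
              have h1 : |t| ≤ 1 := abs_le.mpr ⟨by linarith, ht1⟩
              have h2 : |s| ≤ 1 := abs_le.mpr ⟨by linarith, hs1⟩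
              have := e2norm_nonneg d
              apply add_le_add
              · exact mul_le_mul_of_nonneg_right h1 hu0
              · exact mul_le_mul_of_nonneg_right h2 this
          _ = A := by rw [hd_eq, hA]; ring
      exact hlow _ hdist
    -- F1 : main function for the first mean value theorem
    set F1 : ℝ → ℝ := fun t =>
        (∑ i, (((b0 i + 1 * d i + t * u i) ^ 2 : ℝ)) ^ (α / 2)) ^ (1 / α) -
        (∑ i, (((b0 i + 0 * d i + t * u i) ^ 2 : ℝ)) ^ (α / 2)) ^ (1 / α) with hF1
    set F1' : ℝ → ℝ := fun t =>
        (∑ i, (((b0 i + 1 * d i + t * u i) ^ 2 : ℝ)) ^ (α / 2)) ^ (1 / α - 1) *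
          (∑ i, (b0 i + 1 * d i + t * u i) *
            (((b0 i + 1 * d i + t * u i) ^ 2 : ℝ)) ^ (α / 2 - 1) * u i) -
        (∑ i, (((b0 i + 0 * d i + t * u i) ^ 2 : ℝ)) ^ (α / 2)) ^ (1 / α - 1) *
          (∑ i, (b0 i + 0 * d i + t * u i) *
            (((b0 i + 0 * d i + t * u i) ^ 2 : ℝ)) ^ (α / 2 - 1) * u i) with hF1'
    have hS1 : ∀ t : ℝ, 0 ≤ t → t ≤ 1 →
        0 < ∑ i, (((b0 i + 1 * d i + t * u i) ^ 2 : ℝ)) ^ (α / 2) := by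
      intro t h0 h1
      have h := (hball t 1 h0 h1 zero_le_one le_rfl).1
      calc (0:ℝ) < ∑ i, (((b0 i + t * u i + 1 * d i) ^ 2 : ℝ)) ^ (α / 2) := h
        _ = _ := sum_congr_base α _ _ fun i => by ring
    have hS0 : ∀ t : ℝ, 0 ≤ t → t ≤ 1 →
        0 < ∑ i, (((b0 i + 0 * d i + t * u i) ^ 2 : ℝ)) ^ (α / 2) := by
      intro t h0 h1
      have h := (hball t 0 h0 h1 le_rfl zero_le_one).1
      calc (0:ℝ) < ∑ i, (((b0 i + t * u i + 0 * d i) ^ 2 : ℝ)) ^ (α / 2) := h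
        _ = _ := sum_congr_base α _ _ fun i => by ring
    have hderiv1 : ∀ t ∈ Set.Icc (0:ℝ) 1, HasDerivAt F1 (F1' t) t := by
      intro t ht
      exact (hasDerivAt_lineF hα (fun i => b0 i + 1 * d i) u t
          (ne_of_gt (hS1 t ht.1 ht.2))).sub
        (hasDerivAt_lineF hα (fun i => b0 i + 0 * d i) u t
          (ne_of_gt (hS0 t ht.1 ht.2)))
    obtain ⟨t₀, ht₀, hslope1⟩ := exists_hasDerivAt_eq_slope F1 F1' zero_lt_one
      (fun t ht => ((hderiv1 t ht).continuousAt).continuousWithinAt)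
      (fun t ht => hderiv1 t (Set.mem_Icc.mpr ⟨ht.1.le, ht.2.le⟩))
    have ht₀0 : 0 ≤ t₀ := ht₀.1.le
    have ht₀1 : t₀ ≤ 1 := ht₀.2.le
    have hF1slope : F1 1 - F1 0 = F1' t₀ := by
      rw [hslope1]
      norm_num
    -- second mean value theorem
    set Ps : ℝ → ℝ := fun s => ∑ i, (((b0 i + t₀ * u i + s * d i) ^ 2 : ℝ)) ^ (α / 2) with hPs
    set G2 : ℝ → ℝ := fun s =>
        (Ps s) ^ (1 / α - 1) * ∑ i, (b0 i + t₀ * u i + s * d i) *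
          (((b0 i + t₀ * u i + s * d i) ^ 2 : ℝ)) ^ (α / 2 - 1) * u i with hG2
    set G2' : ℝ → ℝ := fun s =>
        (α - 1) * (Ps s) ^ (1 / α - 2) *
          ((Ps s) * (∑ i, (((b0 i + t₀ * u i + s * d i) ^ 2 : ℝ)) ^ (α / 2 - 1) * (d i * u i)) -
            (∑ i, (b0 i + t₀ * u i + s * d i) *
              (((b0 i + t₀ * u i + s * d i) ^ 2 : ℝ)) ^ (α / 2 - 1) * d i) *
            (∑ i, (b0 i + t₀ * u i + s * d i) *
              (((b0 i + t₀ * u i + s * d i) ^ 2 : ℝ)) ^ (α / 2 - 1) * u i)) with hG2'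
    have hderiv2 : ∀ s ∈ Set.Icc (0:ℝ) 1, HasDerivAt G2 (G2' s) s := by
      intro s hs
      exact hasDerivAt_lineGamma hα (fun i => b0 i + t₀ * u i) d u s
        (hball t₀ s ht₀0 ht₀1 hs.1 hs.2).1
    obtain ⟨s₀, hs₀, hslope2⟩ := exists_hasDerivAt_eq_slope G2 G2' zero_lt_one
      (fun s hs => ((hderiv2 s hs).continuousAt).continuousWithinAt)
      (fun s hs => hderiv2 s (Set.mem_Icc.mpr ⟨hs.1.le, hs.2.le⟩))
    have hG2slope : G2 1 - G2 0 = G2' s₀ := by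
      rw [hslope2]
      norm_num
    -- link : F1' t₀ = G2 1 - G2 0
    have link : F1' t₀ = G2 1 - G2 0 := by
      have l1 := gam_congr α u (fun i => b0 i + 1 * d i + t₀ * u i)
        (fun i => b0 i + t₀ * u i + 1 * d i) (fun i => by ring)
      have l2 := gam_congr α u (fun i => b0 i + 0 * d i + t₀ * u i)
        (fun i => b0 i + t₀ * u i + 0 * d i) (fun i => by ring)
      rw [hF1', hG2, hPs]
      exact congrArg₂ (fun a b => a - b) l1 l2
    -- bound |G2' s₀|
    have hs₀0 : 0 ≤ s₀ := hs₀.1.le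
    have hs₀1 : s₀ ≤ 1 := hs₀.2.le
    have hScpos : 0 < Ps s₀ := (hball t₀ s₀ ht₀0 ht₀1 hs₀0 hs₀1).1
    have hFc : L - A ≤ (Ps s₀) ^ (1 / α) := (hball t₀ s₀ ht₀0 ht₀1 hs₀0 hs₀1).2
    have hBb := Bb_bound hα (fun i => b0 i + t₀ * u i + s₀ * d i) d u
      (by exact hScpos)
    have hbound : |G2' s₀| ≤ (α - 1) * (L - A)⁻¹ * e2norm d * e2norm u := by
      show |(α - 1) * (Ps s₀) ^ (1 / α - 2) *
          ((Ps s₀) * (∑ i, (((b0 i + t₀ * u i + s₀ * d i) ^ 2 : ℝ)) ^ (α / 2 - 1) * (d i * u i)) -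
            (∑ i, (b0 i + t₀ * u i + s₀ * d i) *
              (((b0 i + t₀ * u i + s₀ * d i) ^ 2 : ℝ)) ^ (α / 2 - 1) * d i) *
            (∑ i, (b0 i + t₀ * u i + s₀ * d i) *
              (((b0 i + t₀ * u i + s₀ * d i) ^ 2 : ℝ)) ^ (α / 2 - 1) * u i))|
          ≤ (α - 1) * (L - A)⁻¹ * e2norm d * e2norm u
      have hnn : (0:ℝ) ≤ (α - 1) * (Ps s₀) ^ (1 / α - 2) :=
        mul_nonneg (by linarith) (Real.rpow_nonneg hScpos.le _)
      rw [abs_mul, abs_of_nonneg hnn]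
      have step1 : (α - 1) * (Ps s₀) ^ (1 / α - 2) *
          |(Ps s₀) * (∑ i, (((b0 i + t₀ * u i + s₀ * d i) ^ 2 : ℝ)) ^ (α / 2 - 1) * (d i * u i)) -
            (∑ i, (b0 i + t₀ * u i + s₀ * d i) *
              (((b0 i + t₀ * u i + s₀ * d i) ^ 2 : ℝ)) ^ (α / 2 - 1) * d i) *
            (∑ i, (b0 i + t₀ * u i + s₀ * d i) *
              (((b0 i + t₀ * u i + s₀ * d i) ^ 2 : ℝ)) ^ (α / 2 - 1) * u i)|
          ≤ (α - 1) * (Ps s₀) ^ (1 / α - 2) *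
            ((Ps s₀) ^ (2 - 2 / α) * e2norm d * e2norm u) :=
        mul_le_mul_of_nonneg_left hBb hnn
      refine le_trans step1 ?_
      have hcomb : (Ps s₀) ^ (1 / α - 2) * (Ps s₀) ^ (2 - 2 / α) = (Ps s₀) ^ (-(1 / α)) := by
        rw [← Real.rpow_add hScpos]
        congr 1
        ring
      have hcollapse : (α - 1) * (Ps s₀) ^ (1 / α - 2) *
          ((Ps s₀) ^ (2 - 2 / α) * e2norm d * e2norm u)
          = (α - 1) * (Ps s₀) ^ (-(1 / α)) * e2norm d * e2norm u := by
        calc (α - 1) * (Ps s₀) ^ (1 / α - 2) * ((Ps s₀) ^ (2 - 2 / α) * e2norm d * e2norm u)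
            = (α - 1) * ((Ps s₀) ^ (1 / α - 2) * (Ps s₀) ^ (2 - 2 / α)) * e2norm d * e2norm u := by
              ring
          _ = (α - 1) * (Ps s₀) ^ (-(1 / α)) * e2norm d * e2norm u := by rw [hcomb]
      rw [hcollapse]
      have hinv : (Ps s₀) ^ (-(1 / α)) ≤ (L - A)⁻¹ := by
        rw [Real.rpow_neg hScpos.le]
        exact inv_anti₀ hLA hFc
      exact mul_le_mul_of_nonneg_right (mul_le_mul_of_nonneg_right
        (mul_le_mul_of_nonneg_left hinv (by linarith : (0:ℝ) ≤ α - 1)) (e2norm_nonneg d))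
        (e2norm_nonneg u)
    -- identify goal with F1 1 - F1 0
    have key_eq : (lpnorm α (tb + d) - lpnorm α tb) - (lpnorm α (b0 + d) - L) = F1 1 - F1 0 := by
      have e1 : lpnorm α (tb + d) =
          (∑ i, (((b0 i + 1 * d i + 1 * u i) ^ 2 : ℝ)) ^ (α / 2)) ^ (1 / α) := by
        rw [hlpF (tb + d)]
        congr 1
        refine Finset.sum_congr rfl fun i _ => ?_
        rw [show (tb + d) i = b0 i + 1 * d i + 1 * u i by
          simp only [Pi.add_apply, hu, Pi.sub_apply]; ring]
      have e2 : lpnorm α tb =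
          (∑ i, (((b0 i + 0 * d i + 1 * u i) ^ 2 : ℝ)) ^ (α / 2)) ^ (1 / α) := by
        rw [hlpF tb]
        congr 1
        refine Finset.sum_congr rfl fun i _ => ?_
        rw [show tb i = b0 i + 0 * d i + 1 * u i by
          simp only [hu, Pi.sub_apply]; ring]
      have e3 : lpnorm α (b0 + d) =
          (∑ i, (((b0 i + 1 * d i + 0 * u i) ^ 2 : ℝ)) ^ (α / 2)) ^ (1 / α) := by
        rw [hlpF (b0 + d)]
        congr 1
        refine Finset.sum_congr rfl fun i _ => ?_
        rw [show (b0 + d) i = b0 i + 1 * d i + 0 * u i by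
          simp only [Pi.add_apply]; ring]
      have e4 : L = (∑ i, (((b0 i + 0 * d i + 0 * u i) ^ 2 : ℝ)) ^ (α / 2)) ^ (1 / α) := by
        rw [hL, hlpF b0]
        congr 1
        refine Finset.sum_congr rfl fun i _ => ?_
        simp
      rw [e1, e2, e3, e4, hF1]
    -- final assembly
    calc |(lpnorm α (tb + d) - lpnorm α tb) - (lpnorm α (b0 + d) - L)|
        = |G2' s₀| := by rw [key_eq, hF1slope, link, hG2slope]
      _ ≤ (α - 1) * (L - A)⁻¹ * e2norm d * e2norm u := hbound
      _ ≤ (α - 1) * 1 * A / (L - e2norm u - D) * D := by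
          rw [hd_eq]
          rw [show L - e2norm u - D = L - A by rw [hA]; ring, div_eq_mul_inv, mul_one]
          have h1 : e2norm u ≤ A := by rw [hA]; linarith
          calc (α - 1) * (L - A)⁻¹ * D * e2norm u
              ≤ (α - 1) * (L - A)⁻¹ * D * A := by
                apply mul_le_mul_of_nonneg_left h1
                have : (0:ℝ) ≤ (L - A)⁻¹ := inv_nonneg.mpr hLA.le
                have : (0:ℝ) ≤ α - 1 := by linarith
                positivity
            _ = (α - 1) * A * (L - A)⁻¹ * D := by ring
  · -- m = 1 case
    have hm1 : m = 1 := le_antisymm (not_lt.mp hm2) hm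
    subst hm1
    rw [if_neg hm2]
    have h10 : ∀ w : Fin 1 → ℝ, lpnorm α w = |w 0| := by
      intro w
      rw [hlpF w, Fin.sum_univ_one, ← abs_rpow_eq hα (w 0),
        ← Real.rpow_mul (abs_nonneg (w 0)), mul_one_div_cancel (ne_of_gt hα0), Real.rpow_one]
    have h20 : ∀ w : Fin 1 → ℝ, e2norm w = |w 0| := by
      intro w
      unfold e2norm
      rw [Fin.sum_univ_one, Real.sqrt_sq_eq_abs]
    rw [h20 (tb - b0), h20 δ, h10 b0] at hcond
    simp only [Pi.sub_apply] at hcond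
    rw [h10 (tb + r⁻¹ • δ), h10 tb, h10 (b0 + r⁻¹ • δ), h10 b0]
    simp only [Pi.add_apply, Pi.smul_apply, smul_eq_mul]
    have key : (|tb 0 + r⁻¹ * δ 0| - |tb 0|) - (|b0 0 + r⁻¹ * δ 0| - |b0 0|) = 0 := by
      set a := tb 0 with ha
      set b := b0 0 with hb
      set dd := r⁻¹ * δ 0 with hdd'
      have hdd : |dd| = |δ 0| / r := by
        rw [hdd', abs_mul, abs_inv, abs_of_pos hr, inv_mul_eq_div]
      have habs : |a - b| + |dd| < |b| := by rw [hdd]; exact hcond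
      have k1 : a - b ≤ |a - b| := le_abs_self _
      have k2 : -|a - b| ≤ a - b := neg_abs_le _
      have k3 : dd ≤ |dd| := le_abs_self _
      have k4 : -|dd| ≤ dd := neg_abs_le _
      have k5 : 0 ≤ |a - b| := abs_nonneg _
      have k6 : 0 ≤ |dd| := abs_nonneg _
      rcases lt_trichotomy b 0 with hbneg | hbz | hbpos
      · rw [abs_of_neg hbneg] at habs
        have h1 : a < 0 := by linarith
        have h2 : a + dd < 0 := by linarith
        have h3 : b + dd < 0 := by linarith
        rw [abs_of_neg h1, abs_of_neg h2, abs_of_neg h3, abs_of_neg hbneg]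
        ring
      · rw [hbz, abs_zero] at habs
        have := abs_nonneg (a - 0)
        linarith
      · rw [abs_of_pos hbpos] at habs
        have h1 : 0 < a := by linarith
        have h2 : 0 < a + dd := by linarith
        have h3 : 0 < b + dd := by linarith
        rw [abs_of_pos h1, abs_of_pos h2, abs_of_pos h3, abs_of_pos hbpos]
        ring
    rw [key]
    simp
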